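/- Let X be a Banach space admitting an abstract measure topology τ_μ. If a sequence (x_n) in X converges to x both weakly and with respect to τ_μ (to possibly different limits), then it converges in norm and all limits coincide. -/

import Mathlib

open Filter Topology
noncomputable section
def SpansL1Asy {X : Type*} [NormedAddCommGroup X] [NormedSpace ℝ X] (x : ℕ → X) : Prop :=
  ∃ δ : ℕ → ℝ, (∀ n, δ n ∈ Set.Ico (0 : ℝ) 1) ∧ Tendsto δ atTop (𝓝 0) ∧
    ∀ (m : ℕ) (α : ℕ → ℝ),
      (∑ n ∈ Finset.range m, (1 - δ n) * |α n|) ≤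
          ‖∑ n ∈ Finset.range m, α n • (‖x n‖⁻¹ • x n)‖ ∧
        ‖∑ n ∈ Finset.range m, α n • (‖x n‖⁻¹ • x n)‖ ≤ ∑ n ∈ Finset.range m, |α n|

section AuxLemmas
variable {X : Type*} [NormedAddCommGroup X] [NormedSpace ℝ X]

lemma spansL1Asy_ne_zero {x : ℕ → X} (h : SpansL1Asy x) (n : ℕ) : x n ≠ 0 := by
  obtain ⟨δ, hδmem, -, hest⟩ := h
  intro h0
  have h1 := (hest (n+1) (fun k => if k = n then 1 else 0)).1
  have hL : (∑ k ∈ Finset.range (n+1), (1 - δ k) * |if k = n then (1:ℝ) else 0|)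
      = 1 - δ n := by
    rw [Finset.sum_eq_single n]
    · simp
    · intro k _ hk; simp [hk]
    · intro hk; simp at hk
  have hR : (∑ k ∈ Finset.range (n+1), (if k = n then (1:ℝ) else 0) • (‖x k‖⁻¹ • x k)) = 0 := by
    rw [Finset.sum_eq_single n]
    · simp [h0]
    · intro k _ hk; simp [hk]
    · intro hk; simp at hk
  rw [hL, hR] at h1
  simp at h1
  exact absurd h1 (not_le.2 (by linarith [(hδmem n).2]))

lemma spansL1Asy_exists_dual {x : ℕ → X} (h : SpansL1Asy x) (ε : ℕ → ℝ)
    (hε : ∀ n, |ε n| ≤ 1) :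
    ∃ f : StrongDual ℝ X, ∀ n, f (‖x n‖⁻¹ • x n) = ε n := by
  obtain ⟨δ, hδmem, hδ0, hest⟩ := h
  set u : ℕ → X := fun n => ‖x n‖⁻¹ • x n with hu
  obtain ⟨N, hN⟩ := (Metric.tendsto_atTop.mp hδ0) (1/2) (by norm_num)
  set d : ℝ := max (1/2) ((Finset.range (N+1)).sup' ⟨0, by simp⟩ δ) with hd
  have hd1 : d < 1 := by
    apply max_lt (by norm_num)
    refine (Finset.sup'_lt_iff _).2 ?_
    intro n _; exact (hδmem n).2
  have hdpos : (0:ℝ) < 1 - d := by linarith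
  have hdle : ∀ n, δ n ≤ d := by
    intro n
    rcases le_or_gt n N with h' | h'
    · exact le_max_of_le_right (Finset.le_sup' δ (by simp [Finset.mem_range]; omega))
    · have h2 := hN n h'.le
      rw [Real.dist_eq, sub_zero] at h2
      have := le_abs_self (δ n)
      exact le_max_of_le_left (by linarith)
  have key : ∀ (t : Finset ℕ) (c : ℕ → ℝ),
      ∑ n ∈ t, |c n| ≤ (1 - d)⁻¹ * ‖∑ n ∈ t, c n • u n‖ := by
    intro t c
    obtain ⟨m, hm⟩ := t.exists_nat_subset_range
    set α : ℕ → ℝ := fun n => if n ∈ t then c n else 0 with hα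
    have e1 : ∑ n ∈ Finset.range m, (1 - δ n) * |α n| = ∑ n ∈ t, (1 - δ n) * |c n| := by
      rw [← Finset.sum_subset hm (fun n _ hn => by simp [hα, hn])]
      exact Finset.sum_congr rfl (fun n hn => by simp [hα, hn])
    have e2 : ∑ n ∈ Finset.range m, α n • u n = ∑ n ∈ t, c n • u n := by
      rw [← Finset.sum_subset hm (fun n _ hn => by simp [hα, hn])]
      exact Finset.sum_congr rfl (fun n hn => by simp [hα, hn])
    have h3 : ∑ n ∈ Finset.range m, (1 - δ n) * |α n| ≤ ‖∑ n ∈ Finset.range m, α n • u n‖ :=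
      (hest m α).1
    rw [e1, e2] at h3
    have h4 : (1 - d) * ∑ n ∈ t, |c n| ≤ ∑ n ∈ t, (1 - δ n) * |c n| := by
      rw [Finset.mul_sum]
      apply Finset.sum_le_sum
      intro n _
      exact mul_le_mul_of_nonneg_right (by linarith [hdle n]) (abs_nonneg _)
    rw [inv_mul_eq_div, le_div_iff₀ hdpos, mul_comm]
    linarith
  have hli : LinearIndependent ℝ u := by
    rw [linearIndependent_iff']
    intro t g hsum i hit
    have h1 := key t g
    rw [hsum, norm_zero, mul_zero] at h1
    have hz : ∑ n ∈ t, |g n| = 0 :=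
      le_antisymm h1 (Finset.sum_nonneg fun n _ => abs_nonneg _)
    exact abs_eq_zero.mp
      ((Finset.sum_eq_zero_iff_of_nonneg (fun n _ => abs_nonneg (g n))).mp hz i hit)
  set p := Submodule.span ℝ (Set.range u) with hp
  let bb : Module.Basis ℕ ℝ p := Module.Basis.span hli
  let glin : p →ₗ[ℝ] ℝ := Module.Basis.constr bb ℝ ε
  have hbb : ∀ n, (bb n : X) = u n := fun n => congrArg Subtype.val (Module.Basis.span_apply hli n)
  have hbound : ∀ z : p, ‖glin z‖ ≤ (1-d)⁻¹ * ‖z‖ := by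
    intro z
    obtain ⟨c, hc⟩ := (Finsupp.mem_span_range_iff_exists_finsupp).mp z.2
    rw [Finsupp.sum] at hc
    have hz : z = ∑ i ∈ c.support, c i • bb i := by
      apply Subtype.ext
      rw [AddSubmonoidClass.coe_finset_sum]
      simp only [SetLike.val_smul, hbb]
      exact hc.symm
    have hgz : glin z = ∑ i ∈ c.support, c i * ε i := by
      rw [hz, map_sum]
      refine Finset.sum_congr rfl fun i _ => ?_
      rw [map_smul, smul_eq_mul]
      congr 1
      exact Module.Basis.constr_basis bb ℝ ε i
    have hnz : ‖z‖ = ‖∑ i ∈ c.support, c i • u i‖ := by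
      rw [hc]
      rfl
    rw [hgz, hnz]
    calc ‖∑ i ∈ c.support, c i * ε i‖ ≤ ∑ i ∈ c.support, |c i * ε i| :=
          Finset.abs_sum_le_sum_abs _ _
      _ ≤ ∑ i ∈ c.support, |c i| := by
          refine Finset.sum_le_sum fun i _ => ?_
          rw [abs_mul]
          calc |c i| * |ε i| ≤ |c i| * 1 :=
                mul_le_mul_of_nonneg_left (hε i) (abs_nonneg _)
            _ = |c i| := mul_one _
      _ ≤ (1-d)⁻¹ * ‖∑ i ∈ c.support, c i • u i‖ := key _ _
  let gc : p →L[ℝ] ℝ := LinearMap.mkContinuous glin ((1-d)⁻¹) hbound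
  obtain ⟨f, hf, -⟩ := exists_extension_norm_eq p gc
  refine ⟨f, fun n => ?_⟩
  have hmem : u n ∈ p := Submodule.subset_span ⟨n, rfl⟩
  have h5 : (⟨u n, hmem⟩ : p) = bb n := Subtype.ext (hbb n).symm
  have h6 := hf ⟨u n, hmem⟩
  rw [h5] at h6
  have h7 : f (u n) = f ((bb n : X)) := by rw [hbb]
  rw [h7, h6]
  show glin (bb n) = ε n
  exact Module.Basis.constr_basis bb ℝ ε n
lemma spansL1Asy_norm_tendsto_zero {z : ℕ → X} (h : SpansL1Asy z) {w : X}
    (hw : ∀ f : StrongDual ℝ X, Tendsto (fun n => f (z n)) atTop (𝓝 (f w))) :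
    Tendsto (fun n => ‖z n‖) atTop (𝓝 0) := by
  obtain ⟨g, hg⟩ := spansL1Asy_exists_dual h (fun _ => 1) (fun n => by norm_num)
  obtain ⟨f, hf⟩ := spansL1Asy_exists_dual h (fun n => (-1)^n)
    (fun n => by rw [abs_pow, abs_neg, abs_one, one_pow])
  have hrep : ∀ n, z n = ‖z n‖ • (‖z n‖⁻¹ • z n) := by
    intro n
    rw [smul_smul, mul_inv_cancel₀ (norm_ne_zero_iff.2 (spansL1Asy_ne_zero h n)), one_smul]
  have hgz : ∀ n, g (z n) = ‖z n‖ := by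
    intro n
    conv_lhs => rw [hrep n]
    rw [map_smul, hg n, smul_eq_mul, mul_one]
  have hfz : ∀ n, f (z n) = (-1)^n * ‖z n‖ := by
    intro n
    conv_lhs => rw [hrep n]
    rw [map_smul, hf n, smul_eq_mul, mul_comm]
  have h1 : Tendsto (fun n => ‖z n‖) atTop (𝓝 (g w)) := by
    have := hw g
    simpa only [hgz] using this
  have h2 : Tendsto (fun n => (-1:ℝ)^n * ‖z n‖) atTop (𝓝 (f w)) := by
    have := hw f
    simpa only [hfz] using this
  have he : Tendsto (fun n : ℕ => 2*n) atTop atTop :=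
    tendsto_atTop_atTop_of_monotone (fun a b hab => by omega) (fun b => ⟨b, by omega⟩)
  have ho : Tendsto (fun n : ℕ => 2*n+1) atTop atTop :=
    tendsto_atTop_atTop_of_monotone (fun a b hab => by omega) (fun b => ⟨b, by omega⟩)
  have heven : Tendsto (fun n => ‖z (2*n)‖) atTop (𝓝 (f w)) := by
    have h3 := h2.comp he
    have : (fun n => (-1:ℝ)^n * ‖z n‖) ∘ (fun n : ℕ => 2*n) = fun n => ‖z (2*n)‖ := by
      funext n
      simp [Function.comp, pow_mul]
    rwa [this] at h3
  have hodd : Tendsto (fun n => -‖z (2*n+1)‖) atTop (𝓝 (f w)) := by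
    have h3 := h2.comp ho
    have : (fun n => (-1:ℝ)^n * ‖z n‖) ∘ (fun n : ℕ => 2*n+1) = fun n => -‖z (2*n+1)‖ := by
      funext n
      simp [Function.comp, pow_succ, pow_mul]
    rwa [this] at h3
  have e1 : f w = g w := tendsto_nhds_unique heven (h1.comp he)
  have e2 : f w = - g w := by
    have h4 : Tendsto (fun n => -‖z (2*n+1)‖) atTop (𝓝 (-(g w))) := (h1.comp ho).neg
    exact tendsto_nhds_unique hodd h4
  have : g w = 0 := by linarith
  rwa [this] at h1

end AuxLemmas

/-- An abstract measure topology on a Banach space. -/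
structure AbstractMeasureTopology (X : Type*) [NormedAddCommGroup X] [NormedSpace ℝ X] where
  τ : TopologicalSpace X
  sequential : @SequentialSpace X τ
  unique_limits : ∀ (s : ℕ → X) (a b : X),
    Tendsto s atTop (@nhds X τ a) → Tendsto s atTop (@nhds X τ b) → a = b
  weaker : ∀ U : Set X, IsOpen[τ] U → IsOpen U
  translation : ∀ (s : ℕ → X) (x : X),
    Tendsto s atTop (@nhds X τ x) ↔ Tendsto (fun n => s n - x) atTop (@nhds X τ 0)
  asy_to_zero : ∀ s : ℕ → X, (∃ M, ∀ n, ‖s n‖ ≤ M) → SpansL1Asy s →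
    Tendsto s atTop (@nhds X τ 0)
  null_structure : ∀ s : ℕ → X, Tendsto s atTop (@nhds X τ 0) →
    (∃ M, ∀ n, ‖s n‖ ≤ M) ∧
      ∃ φ : ℕ → ℕ, StrictMono φ ∧
        (SpansL1Asy (s ∘ φ) ∨ Tendsto (fun n => ‖s (φ n)‖) atTop (𝓝 0))

/-- A Banach space is L-embedded if its canonical image in the bidual is the range
of an L-projection. -/
def IsLEmbedded (Y : Type*) [NormedAddCommGroup Y] [NormedSpace ℝ Y] : Prop :=
  ∃ P : StrongDual ℝ (StrongDual ℝ Y) →L[ℝ]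
      StrongDual ℝ (StrongDual ℝ Y),
    (∀ z, P (P z) = P z) ∧ (∀ z, ‖z‖ = ‖P z‖ + ‖z - P z‖) ∧
    Set.range ⇑P = Set.range ⇑(NormedSpace.inclusionInDoubleDual ℝ Y)
/-- If a sequence converges both weakly and in the abstract measure topology,
then it converges in norm and all limits coincide. -/
theorem weak_and_measure_implies_norm {X : Type*} [NormedAddCommGroup X]
    [NormedSpace ℝ X] [CompleteSpace X]
    (T : AbstractMeasureTopology X) (s : ℕ → X) (a b : X)
    (hw : ∀ f : StrongDual ℝ X, Tendsto (fun n => f (s n)) atTop (𝓝 (f a)))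
    (hτ : Tendsto s atTop (@nhds X T.τ b)) :
    a = b ∧ Tendsto s atTop (𝓝 a) := by
  have hwy : ∀ (c : X) (f : StrongDual ℝ X),
      Tendsto (fun n => f (s n - c)) atTop (𝓝 (f (a - c))) := by
    intro c f
    simpa [map_sub] using (hw f).sub (tendsto_const_nhds (x := f c))
  have main : ∀ (y : ℕ → X) (w : X), Tendsto y atTop (@nhds X T.τ 0) →
      (∀ f : StrongDual ℝ X, Tendsto (fun n => f (y n)) atTop (𝓝 (f w))) →
      ∃ φ : ℕ → ℕ, StrictMono φ ∧ Tendsto (fun n => ‖y (φ n)‖) atTop (𝓝 0) := by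
    intro y w hy hyw
    obtain ⟨-, φ, hφ, hcase⟩ := T.null_structure y hy
    refine ⟨φ, hφ, ?_⟩
    rcases hcase with hsp | hn
    · exact spansL1Asy_norm_tendsto_zero hsp (fun f => (hyw f).comp hφ.tendsto_atTop)
    · exact hn
  have hab : a = b := by
    obtain ⟨φ, hφ, hn⟩ :=
      main (fun n => s n - b) (a - b) ((T.translation s b).mp hτ) (hwy b)
    have hzero : ∀ f : StrongDual ℝ X, f (a - b) = 0 := by
      intro f
      have h1 : Tendsto (fun n => f (s (φ n) - b)) atTop (𝓝 (f (a - b))) :=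
        (hwy b f).comp hφ.tendsto_atTop
      have h3 : Tendsto (fun n => s (φ n) - b) atTop (𝓝 0) :=
        tendsto_zero_iff_norm_tendsto_zero.mpr hn
      have h2 : Tendsto (fun n => f (s (φ n) - b)) atTop (𝓝 0) := by
        have := (f.continuous.tendsto 0).comp h3
        simpa only [Function.comp_def, map_zero] using this
      exact tendsto_nhds_unique h1 h2
    exact sub_eq_zero.mp (NormedSpace.eq_zero_of_forall_dual_eq_zero ℝ hzero)
  refine ⟨hab, ?_⟩
  rw [← hab] at hτ
  rw [tendsto_iff_norm_sub_tendsto_zero]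
  by_contra hcon
  rw [Metric.tendsto_atTop] at hcon
  push_neg at hcon
  obtain ⟨ε, hε, hfreq⟩ := hcon
  obtain ⟨ψ, hψ, hψε⟩ := Filter.extraction_of_frequently_atTop
    (P := fun n => ε ≤ ‖s n - a‖) (Filter.frequently_atTop'.2 <| by
      intro N
      obtain ⟨n, hn, hdn⟩ := hfreq (N + 1)
      refine ⟨n, by omega, ?_⟩
      rwa [Real.dist_eq, sub_zero, abs_of_nonneg (norm_nonneg _)] at hdn)
  have hynull : Tendsto (fun n => s (ψ n) - a) atTop (@nhds X T.τ 0) := by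
    have h0 : Tendsto (fun n => s n - a) atTop (@nhds X T.τ 0) :=
      (T.translation s a).mp hτ
    exact h0.comp hψ.tendsto_atTop
  obtain ⟨φ, hφ, hn⟩ := main (fun n => s (ψ n) - a) (a - a) hynull
    (fun f => (hwy a f).comp hψ.tendsto_atTop)
  exact absurd (ge_of_tendsto' hn (fun n => hψε (φ n))) (by linarith)
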